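/- arXiv:1702.07478 — 11 statements merged into one kernel-verified Lean document; each statement's English description precedes it below -/
import Mathlib

section
/- Let S be a finite nonempty type and P : S → S → ℝ a row-stochastic matrix with P s s < 1 for all s. Let SL(s) := 1/(1 − P s s) and let P* be defined by P*(s,t) := SL(s)·P(s,t) for t ≠ s and P*(s,s) := 0. Suppose ψ* : S → ℝ satisfies ψ*(s) ≥ 0 for all s, Σ_s ψ*(s) = 1, and Σ_s ψ*(s)·P*(s,t) = ψ*(t) for all t (ψ* is a stationary distribution of P*). Define ψ(s) := ψ*(s)·SL(s) / Σ_t ψ*(t)·SL(t). Then Σ_s ψ(s) = 1 and Σ_s ψ(s)·P(s,t) = ψ(t) for all t, i.e. ψ is a stationary distribution of P. (Theorem 5.1: relation between the steady-state PMFs of the DTMC and of the embedded DTMC.) -/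
/-- Theorem 5.1: the steady-state PMF of the DTMC is obtained from that of the
embedded DTMC (EDTMC) by weighting with the self-loops abstraction factors and
normalizing. -/
theorem edtmc_to_dtmc_stationary {S : Type*} [Fintype S] [Nonempty S]
    (P : S → S → ℝ)
    (hP_nonneg : ∀ s t, 0 ≤ P s t)
    (hP_row : ∀ s, ∑ t, P s t = 1)
    (hP_lt : ∀ s, P s s < 1)
    (SL : S → ℝ) (hSL : ∀ s, SL s = 1 / (1 - P s s))
    (Pstar : S → S → ℝ)
    (hPstar_off : ∀ s t, t ≠ s → Pstar s t = SL s * P s t)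
    (hPstar_diag : ∀ s, Pstar s s = 0)
    (ψstar : S → ℝ)
    (hψstar_nonneg : ∀ s, 0 ≤ ψstar s)
    (hψstar_sum : ∑ s, ψstar s = 1)
    (hψstar_stat : ∀ t, ∑ s, ψstar s * Pstar s t = ψstar t)
    (ψ : S → ℝ)
    (hψ : ∀ s, ψ s = ψstar s * SL s / ∑ t, ψstar t * SL t) :
    (∑ s, ψ s = 1) ∧ (∀ t, ∑ s, ψ s * P s t = ψ t) := by
  classical
  have hsub : ∀ s, 0 < 1 - P s s := fun s => by linarith [hP_lt s]
  have hSLpos : ∀ s, 0 < SL s := fun s => by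
    rw [hSL s]; exact div_pos one_pos (hsub s)
  set C := ∑ t, ψstar t * SL t with hC
  have hCpos : 0 < C := by
    obtain ⟨s, hs⟩ : ∃ s, 0 < ψstar s := by
      by_contra h
      push_neg at h
      have : ∀ s, ψstar s = 0 := fun s => le_antisymm (h s) (hψstar_nonneg s)
      simp [this] at hψstar_sum
    refine Finset.sum_pos' (fun t _ => mul_nonneg (hψstar_nonneg t) (hSLpos t).le)
      ⟨s, Finset.mem_univ s, mul_pos hs (hSLpos s)⟩
  have hCne : C ≠ 0 := hCpos.ne'
  constructor
  · calc ∑ s, ψ s = (∑ s, ψstar s * SL s) / C := by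
          rw [Finset.sum_div]; exact Finset.sum_congr rfl fun s _ => hψ s
    _ = 1 := by rw [← hC]; field_simp
  · intro t
    have key : ∑ s, ψstar s * SL s * P s t = ψstar t * SL t := by
      have split : ∀ s, ψstar s * SL s * P s t
          = ψstar s * Pstar s t + (if s = t then ψstar t * SL t * P t t else 0) := by
        intro s
        by_cases h : s = t
        · subst h
          simp [hPstar_diag s]
        · rw [hPstar_off s t (Ne.symm h), if_neg h]
          ring
      rw [Finset.sum_congr rfl fun s _ => split s, Finset.sum_add_distrib,
        hψstar_stat t, Finset.sum_ite_eq' Finset.univ t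
          (fun _ => ψstar t * SL t * P t t), if_pos (Finset.mem_univ t)]
      have hslt : SL t = 1 / (1 - P t t) := hSL t
      have := (hsub t).ne'
      field_simp [hslt]
      have h1 : SL t * (1 - P t t) = 1 := by rw [hslt, one_div, inv_mul_cancel₀ this]
      linear_combination (-ψstar t) * h1
    calc ∑ s, ψ s * P s t = (∑ s, ψstar s * SL s * P s t) / C := by
          rw [Finset.sum_div]
          exact Finset.sum_congr rfl fun s _ => by rw [hψ s]; ring
      _ = ψstar t * SL t / C := by rw [key]
      _ = ψ t := (hψ t).symm
end

section
/- Let S be a finite type, L a type of labels with a distinguished element ∅ (the empty multiaction part), and p : S → L → S → ℝ a step kernel such that the empty-step kernel is diagonal: p s ∅ t = 0 whenever t ≠ s. Call a state s tangible if p s ∅ s > 0 and vanishing otherwise. If R is a step stochastic bisimulation for p, then for every (s₁,s₂) ∈ R one has p s₁ ∅ s₁ = p s₂ ∅ s₂; in particular s₁ is tangible if and only if s₂ is tangible, so R is contained in (T × T) ∪ (V × V), where T and V denote the sets of tangible and vanishing states. (Proposition 6.1: every step stochastic bisimulation relates tangible states only with tangible ones and vanishing states only with vanishing ones.) -/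
/-- The overall probability to move from `s` into the set of states `H`
via steps with multiaction part `A`. -/
noncomputable def PMA {S L : Type*} [Fintype S]
    (p : S → L → S → ℝ) (A : L) (s : S) (H : Set S) : ℝ :=
  ∑ t, H.indicator (p s A) t

/-- `H` is an equivalence class of the relation `R`. -/
def IsClass {S : Type*} (R : S → S → Prop) (H : Set S) : Prop :=
  ∃ s, H = {t | R s t}

/-- `R` is a step stochastic bisimulation for the step kernel `p`. -/
def IsStepBisim {S L : Type*} [Fintype S]
    (p : S → L → S → ℝ) (R : S → S → Prop) : Prop :=
  Equivalence R ∧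
    ∀ s₁ s₂, R s₁ s₂ → ∀ H : Set S, IsClass R H → ∀ A : L,
      PMA p A s₁ H = PMA p A s₂ H

/-- Proposition 6.1: every step stochastic bisimulation relates tangible
states only with tangible states, and vanishing states only with vanishing
states (a state `s` being tangible iff `p s ∅ s > 0`, where the empty-step
kernel is diagonal). -/
theorem stepBisim_tangible_vanishing {S L : Type*} [Fintype S]
    (emptyStep : L)
    (p : S → L → S → ℝ)
    (hp_nonneg : ∀ s A t, 0 ≤ p s A t)
    (hp_diag : ∀ s t, t ≠ s → p s emptyStep t = 0)
    (R : S → S → Prop) (hR : IsStepBisim p R) :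
    ∀ s₁ s₂, R s₁ s₂ →
      p s₁ emptyStep s₁ = p s₂ emptyStep s₂ ∧
      (0 < p s₁ emptyStep s₁ ↔ 0 < p s₂ emptyStep s₂) := by
  intro s₁ s₂ h12
  obtain ⟨hEq, hBis⟩ := hR
  set H : Set S := {t | R s₁ t} with hH
  have hs₁ : s₁ ∈ H := hEq.refl s₁
  have hs₂ : s₂ ∈ H := h12
  have key : ∀ s, s ∈ H → PMA p emptyStep s H = p s emptyStep s := by
    intro s hs
    unfold PMA
    rw [Finset.sum_eq_single s]
    · simp [Set.indicator_of_mem hs]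
    · intro t _ ht
      rcases Set.indicator_eq_zero_or_self H (p s emptyStep) t with h | h
      · exact h
      · rw [h]; exact hp_diag s t ht
    · simp
  have hmain := hBis s₁ s₂ h12 H ⟨s₁, rfl⟩ emptyStep
  rw [key s₁ hs₁, key s₂ hs₂] at hmain
  exact ⟨hmain, by rw [hmain]⟩
end

section
/- Let S be a finite type, L a type of labels, p : S → L → S → ℝ a step kernel, and i₁, i₂ ∈ S. Let (R_j)_{j ∈ J} be a nonempty family of equivalence relations on S such that each R_j is a step stochastic bisimulation for p and (i₁,i₂) ∈ R_j for every j. Then the transitive closure R of the union ⋃_{j∈J} R_j is again an equivalence relation on S, contains the pair (i₁,i₂), and is a step stochastic bisimulation for p. Consequently, the union of all step stochastic bisimulations containing (i₁,i₂) is itself the largest step stochastic bisimulation containing (i₁,i₂). (Proposition 6.2.) -/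
lemma transGen_symm {S : Type*} {r : S → S → Prop} (hsymm : ∀ ⦃a b⦄, r a b → r b a)
    {a b : S} (h : Relation.TransGen r a b) : Relation.TransGen r b a := by
  induction h with
  | single h => exact Relation.TransGen.single (hsymm h)
  | tail _ h ih => exact Relation.TransGen.trans (Relation.TransGen.single (hsymm h)) ih

open Finset in
/-- Summing a set-indicator over an `E`-closed set only depends on the class sums. -/
lemma sum_indicator_closed {S : Type*} [Fintype S] {E : S → S → Prop} (hE : Equivalence E)
    {f g : S → ℝ}
    (hclass : ∀ s : S, ∑ t, (({u | E s u} : Set S).indicator f) t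
      = ∑ t, (({u | E s u} : Set S).indicator g) t)
    {H : Set S} (hH : ∀ ⦃t u⦄, t ∈ H → E t u → u ∈ H) :
    ∑ t, H.indicator f t = ∑ t, H.indicator g t := by
  classical
  let Es : Setoid S := ⟨E, hE⟩
  have key : ∀ h : S → ℝ,
      ∑ t, H.indicator h t
        = ∑ c : Quotient Es, ∑ t ∈ univ.filter (fun t => (Quotient.mk Es t) = c),
            H.indicator h t := by
    intro h
    rw [Finset.sum_fiberwise]
  rw [key f, key g]
  refine Finset.sum_congr rfl fun c _ => ?_
  obtain ⟨s, rfl⟩ := Quotient.exists_rep c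
  have hmem : ∀ t : S, (Quotient.mk Es t = Quotient.mk Es s) ↔ E s t := by
    intro t
    constructor
    · intro ht; exact hE.symm (Quotient.eq''.mp ht)
    · intro ht; exact Quotient.sound (hE.symm ht)
  by_cases hc : ∃ t, E s t ∧ t ∈ H
  · obtain ⟨t₀, ht₀, ht₀H⟩ := hc
    have hsub : ∀ t, E s t → t ∈ H := fun t ht =>
      hH ht₀H (hE.trans (hE.symm ht₀) ht)
    have step : ∀ h : S → ℝ,
        ∑ t ∈ univ.filter (fun t => (Quotient.mk Es t) = Quotient.mk Es s),
          H.indicator h t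
          = ∑ t, (({u | E s u} : Set S).indicator h) t := by
      intro h
      have h1 : ∀ t ∈ univ.filter (fun t => (Quotient.mk Es t) = Quotient.mk Es s),
          H.indicator h t = (({u | E s u} : Set S).indicator h) t := by
        intro t ht
        simp only [mem_filter] at ht
        have hEst : E s t := (hmem t).mp ht.2
        rw [Set.indicator_of_mem (hsub t hEst) h]
        exact (Set.indicator_of_mem hEst h).symm
      rw [Finset.sum_congr rfl h1]
      refine Finset.sum_subset (Finset.subset_univ _) fun t _ ht => ?_
      simp only [mem_filter, mem_univ, true_and] at ht
      exact Set.indicator_of_notMem (fun hEst => ht ((hmem t).mpr hEst)) h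
    rw [step f, step g, hclass s]
  · push_neg at hc
    have step : ∀ h : S → ℝ,
        ∑ t ∈ univ.filter (fun t => (Quotient.mk Es t) = Quotient.mk Es s),
          H.indicator h t = 0 := by
      intro h
      refine Finset.sum_eq_zero fun t ht => ?_
      simp only [mem_filter] at ht
      exact Set.indicator_of_notMem (fun hmemH => hc t ((hmem t).mp ht.2) hmemH) h
    rw [step f, step g]

/-- The transitive closure of a nonempty union of step bisimulations is a step
bisimulation. -/
lemma transGen_isStepBisim {S L : Type*} [Fintype S]
    (p : S → L → S → ℝ)
    {J : Type*} [Nonempty J]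
    (Rj : J → S → S → Prop)
    (hRj : ∀ j, IsStepBisim p (Rj j)) :
    IsStepBisim p (Relation.TransGen (fun a b => ∃ j, Rj j a b)) := by
  set U : S → S → Prop := fun a b => ∃ j, Rj j a b with hU
  set R : S → S → Prop := Relation.TransGen U with hR
  obtain ⟨j₀⟩ := ‹Nonempty J›
  have hequiv : Equivalence R := by
    refine ⟨fun a => Relation.TransGen.single ⟨j₀, (hRj j₀).1.refl a⟩, ?_, ?_⟩
    · intro a b hab
      exact transGen_symm (fun x y ⟨j, h⟩ => ⟨j, (hRj j).1.symm h⟩) hab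
    · intro a b c hab hbc
      exact Relation.TransGen.trans hab hbc
  refine ⟨hequiv, ?_⟩
  have hstep : ∀ s₁ s₂, U s₁ s₂ → ∀ H : Set S, IsClass R H → ∀ A : L,
      PMA p A s₁ H = PMA p A s₂ H := by
    rintro s₁ s₂ ⟨j, hj⟩ H ⟨s₀, rfl⟩ A
    have hclass : ∀ s : S, ∑ t, (({u | Rj j s u} : Set S).indicator (p s₁ A)) t
        = ∑ t, (({u | Rj j s u} : Set S).indicator (p s₂ A)) t :=
      fun s => (hRj j).2 s₁ s₂ hj {u | Rj j s u} ⟨s, rfl⟩ A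
    have hH : ∀ ⦃t u : S⦄, t ∈ {t | R s₀ t} → Rj j t u → u ∈ {t | R s₀ t} :=
      fun t u ht htu => Relation.TransGen.tail ht ⟨j, htu⟩
    exact sum_indicator_closed (hRj j).1 hclass hH
  intro s₁ s₂ h12 H hHc A
  induction h12 with
  | single h => exact hstep _ _ h H hHc A
  | tail _ h ih => exact ih.trans (hstep _ _ h H hHc A)

/-- Proposition 6.2: the transitive closure of a (nonempty) union of step
stochastic bisimulations all containing the pair `(i₁, i₂)` is again a step
stochastic bisimulation containing `(i₁, i₂)`; consequently the union of all
step stochastic bisimulations containing `(i₁, i₂)` is itself the largest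
step stochastic bisimulation containing `(i₁, i₂)`. -/
theorem largest_step_stochastic_bisimulation {S L : Type*} [Fintype S]
    (p : S → L → S → ℝ)
    (hp_nonneg : ∀ s A t, 0 ≤ p s A t)
    (i₁ i₂ : S)
    {J : Type*} [Nonempty J]
    (Rj : J → S → S → Prop)
    (hRj : ∀ j, IsStepBisim p (Rj j))
    (hRj_i : ∀ j, Rj j i₁ i₂) :
    (IsStepBisim p (Relation.TransGen (fun a b => ∃ j, Rj j a b)) ∧
        Relation.TransGen (fun a b => ∃ j, Rj j a b) i₁ i₂) ∧
      (IsStepBisim p (fun a b => ∃ R' : S → S → Prop,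
          IsStepBisim p R' ∧ R' i₁ i₂ ∧ R' a b) ∧
        (∃ R' : S → S → Prop, IsStepBisim p R' ∧ R' i₁ i₂ ∧ R' i₁ i₂) ∧
        ∀ R' : S → S → Prop, IsStepBisim p R' → R' i₁ i₂ → ∀ a b, R' a b →
          ∃ R'' : S → S → Prop, IsStepBisim p R'' ∧ R'' i₁ i₂ ∧ R'' a b) := by
  obtain ⟨j₀⟩ := ‹Nonempty J›
  have part1bisim := transGen_isStepBisim p Rj hRj
  have part1pair : Relation.TransGen (fun a b => ∃ j, Rj j a b) i₁ i₂ :=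
    Relation.TransGen.single ⟨j₀, hRj_i j₀⟩
  -- the union of all bisimulations containing the pair
  set Ru : S → S → Prop := fun a b => ∃ R' : S → S → Prop,
    IsStepBisim p R' ∧ R' i₁ i₂ ∧ R' a b with hRu
  -- index type of all bisimulations containing the pair
  let K := {R' : S → S → Prop // IsStepBisim p R' ∧ R' i₁ i₂}
  have hKne : Nonempty K :=
    ⟨⟨Relation.TransGen (fun a b => ∃ j, Rj j a b), part1bisim, part1pair⟩⟩
  set T : S → S → Prop := Relation.TransGen (fun a b => ∃ k : K, k.1 a b) with hT
  have hTbisim : IsStepBisim p T := transGen_isStepBisim p (fun k : K => k.1)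
    (fun k => k.2.1)
  have hTpair : T i₁ i₂ :=
    Relation.TransGen.single ⟨Classical.choice hKne, (Classical.choice hKne).2.2⟩
  have hRuT : Ru = T := by
    funext a b
    apply propext
    constructor
    · rintro ⟨R', h1, h2, h3⟩
      exact Relation.TransGen.single ⟨⟨R', h1, h2⟩, h3⟩
    · intro h
      exact ⟨T, hTbisim, hTpair, h⟩
  refine ⟨⟨part1bisim, part1pair⟩, ?_, ⟨T, hTbisim, hTpair, hTpair⟩, ?_⟩
  · exact hRuT ▸ hTbisim
  · intro R' h1 h2 a b h3
    exact ⟨R', h1, h2, h3⟩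
end

section
/- Let S₁ and S₂ be finite types with step kernels p₁ : S₁ → L → S₁ → ℝ and p₂ : S₂ → L → S₂ → ℝ and initial states i₁ ∈ S₁, i₂ ∈ S₂. Suppose β : S₁ ≃ S₂ is a bijection with β(i₁) = i₂ and p₂ (β s) A (β t) = p₁ s A t for all s, t ∈ S₁ and all labels A (β is an isomorphism of the labeled probabilistic transition systems). Define the step kernel p on the disjoint union S = S₁ ⊕ S₂ by p (inl s) A (inl t) := p₁ s A t, p (inr s) A (inr t) := p₂ s A t, and p := 0 between the two components. Then the equivalence relation on S generated by the pairs {(inl s, inr (β s)) : s ∈ S₁} is a step stochastic bisimulation for p containing (inl i₁, inr i₂). (Theorem 7.1, first implication: equivalence with respect to transition systems implies step stochastic bisimulation equivalence.) -/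
/-- Theorem 7.1 (first implication): if the labeled probabilistic transition
systems of two processes are isomorphic via `β`, then the equivalence relation
on the disjoint union generated by the pairs `(inl s, inr (β s))` is a step
stochastic bisimulation containing the pair of initial states. -/
theorem ts_isomorphism_implies_stepBisim {S₁ S₂ L : Type*}
    [Fintype S₁] [Fintype S₂]
    (p₁ : S₁ → L → S₁ → ℝ) (p₂ : S₂ → L → S₂ → ℝ)
    (hp₁ : ∀ s A t, 0 ≤ p₁ s A t) (hp₂ : ∀ s A t, 0 ≤ p₂ s A t)
    (i₁ : S₁) (i₂ : S₂)
    (β : S₁ ≃ S₂) (hβi : β i₁ = i₂)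
    (hβp : ∀ s A t, p₂ (β s) A (β t) = p₁ s A t)
    (p : S₁ ⊕ S₂ → L → S₁ ⊕ S₂ → ℝ)
    (hp11 : ∀ s A t, p (Sum.inl s) A (Sum.inl t) = p₁ s A t)
    (hp22 : ∀ s A t, p (Sum.inr s) A (Sum.inr t) = p₂ s A t)
    (hp12 : ∀ s A t, p (Sum.inl s) A (Sum.inr t) = 0)
    (hp21 : ∀ s A t, p (Sum.inr s) A (Sum.inl t) = 0) :
    IsStepBisim p
        (Relation.EqvGen (fun a b => ∃ s, a = Sum.inl s ∧ b = Sum.inr (β s))) ∧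
      Relation.EqvGen (fun a b => ∃ s, a = Sum.inl s ∧ b = Sum.inr (β s))
        (Sum.inl i₁) (Sum.inr i₂) := by
  classical
  set r := (fun a b => ∃ s, a = Sum.inl s ∧ b = Sum.inr (β s)) with hr
  let f : S₁ ⊕ S₂ → S₂ := Sum.elim (fun s => β s) id
  have hgen : ∀ a b, Relation.EqvGen r a b ↔ f a = f b := by
    intro a b
    constructor
    · intro h
      induction h with
      | rel a b hab => obtain ⟨s, rfl, rfl⟩ := hab; rfl
      | refl => rfl
      | symm _ _ _ ih => exact ih.symm
      | trans _ _ _ _ _ ih1 ih2 => exact ih1.trans ih2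
    · intro h
      match a, b with
      | Sum.inl s, Sum.inl t =>
        have : s = t := β.injective (by simpa [f] using h)
        exact this ▸ Relation.EqvGen.refl _
      | Sum.inl s, Sum.inr t =>
        refine Relation.EqvGen.rel _ _ ⟨s, rfl, ?_⟩
        simp only [f, Sum.elim_inl, Sum.elim_inr, id] at h
        rw [h]
      | Sum.inr s, Sum.inl t =>
        refine Relation.EqvGen.symm _ _ (Relation.EqvGen.rel _ _ ⟨t, rfl, ?_⟩)
        simp only [f, Sum.elim_inl, Sum.elim_inr, id] at h
        rw [h]
      | Sum.inr s, Sum.inr t =>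
        simp only [f, Sum.elim_inr, id] at h
        exact h ▸ Relation.EqvGen.refl _
  have key : ∀ (A : L) (x : S₁ ⊕ S₂) (c : S₂),
      PMA p A x {t | f t = c} = p x A (Sum.inl (β.symm c)) + p x A (Sum.inr c) := by
    intro A x c
    unfold PMA
    rw [Fintype.sum_sum_type]
    congr 1
    · rw [Finset.sum_eq_single (β.symm c)]
      · simp [Set.indicator, f]
      · intro b _ hb
        have hbc : ¬ (β b = c) := fun h => hb (by rw [← h]; simp)
        simp [Set.indicator, f, hbc]
      · simp
    · rw [Finset.sum_eq_single c]
      · simp [Set.indicator, f]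
      · intro b _ hb; simp [Set.indicator, f, hb]
      · simp
  refine ⟨⟨Relation.EqvGen.is_equivalence r, ?_⟩, ?_⟩
  · intro s₁ s₂ h12 H hH A
    obtain ⟨s₀, rfl⟩ := hH
    have hHc : {t | Relation.EqvGen r s₀ t} = {t | f t = f s₀} := by
      ext t
      rw [Set.mem_setOf_eq, Set.mem_setOf_eq, hgen, eq_comm]
    rw [hHc]
    set c := f s₀
    rw [key A s₁ c, key A s₂ c]
    have hf : f s₁ = f s₂ := (hgen _ _).mp h12
    match s₁, s₂ with
    | Sum.inl a, Sum.inl b =>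
      have : a = b := β.injective (by simpa [f] using hf)
      rw [this]
    | Sum.inl a, Sum.inr b =>
      have hab : β a = b := by simpa [f] using hf
      rw [hp11, hp12, hp21, hp22, ← hab, add_zero, zero_add]
      rw [show (c : S₂) = β (β.symm c) by simp]
      rw [hβp]; simp
    | Sum.inr a, Sum.inl b =>
      have hab : β b = a := by simpa [f, eq_comm] using hf
      rw [hp11, hp12, hp21, hp22, ← hab, add_zero, zero_add]
      rw [show (c : S₂) = β (β.symm c) by simp]
      rw [hβp]; simp
    | Sum.inr a, Sum.inr b =>
      have : a = b := by simpa [f] using hf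
      rw [this]
  · exact Relation.EqvGen.rel _ _ ⟨i₁, rfl, by rw [hβi]⟩
end

section
/- Let S be a finite type, P : S → S → ℝ a matrix, and R an ordinary lumping for P. If μ, μ' : S → ℝ satisfy Σ_{s∈H} μ(s) = Σ_{s∈H} μ'(s) for every R-equivalence class H, then for every R-equivalence class H one has Σ_{t∈H} Σ_{s∈S} μ(s)·P(s,t) = Σ_{t∈H} Σ_{s∈S} μ'(s)·P(s,t); that is, equality of class sums of distributions is preserved under one step of the chain. (Induction step in the proof of Proposition 8.1.) -/
open scoped Classical

noncomputable def classSum {S : Type*} [Fintype S] (H : Set S) (f : S → ℝ) : ℝ :=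
  ∑ s, H.indicator f s

def IsLumping {S : Type*} [Fintype S] (P : S → S → ℝ) (R : S → S → Prop) : Prop :=
  Equivalence R ∧
    ∀ s₁ s₂, R s₁ s₂ → ∀ H : Set S, IsClass R H →
      classSum H (P s₁) = classSum H (P s₂)

open Finset in
lemma classSum_eq_filter {S : Type*} [Fintype S] (H : Set S) (f : S → ℝ) :
    classSum H f = ∑ s ∈ Finset.univ.filter (fun s => s ∈ H), f s := by
  classical
  unfold classSum
  simp [Set.indicator_apply, Finset.sum_filter]

open Finset in
lemma classSum_step {S : Type*} [Fintype S] (H : Set S) (P : S → S → ℝ) (μ : S → ℝ) :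
    classSum H (fun t => ∑ s, μ s * P s t) = ∑ s, μ s * classSum H (P s) := by
  classical
  simp only [classSum_eq_filter]
  rw [Finset.sum_comm]
  simp [Finset.mul_sum]

open Finset in
lemma sum_mul_eq {S : Type*} [Fintype S] {R : S → S → Prop} (hE : Equivalence R)
    (g : S → ℝ) (hg : ∀ s₁ s₂, R s₁ s₂ → g s₁ = g s₂) (μ μ' : S → ℝ)
    (hμ : ∀ H : Set S, IsClass R H → classSum H μ = classSum H μ') :
    ∑ s, μ s * g s = ∑ s, μ' s * g s := by
  classical
  letI st : Setoid S := ⟨R, hE⟩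
  have key : ∀ ν : S → ℝ,
      ∑ s, ν s * g s =
        ∑ q : Quotient st, g q.out * classSum {t | R q.out t} ν := by
    intro ν
    rw [← Finset.sum_fiberwise Finset.univ (fun s => (Quotient.mk st s : Quotient st))
      (fun s => ν s * g s)]
    refine Finset.sum_congr rfl fun q _ => ?_
    have hmem : ∀ s : S, (Quotient.mk st s = q) ↔ R q.out s := by
      intro s
      constructor
      · intro h
        have : st.r s q.out := Quotient.mk_eq_iff_out.mp h
        exact hE.symm this
      · intro h
        rw [← Quotient.out_eq q]
        exact Quotient.sound (hE.symm h)
    rw [classSum_eq_filter, Finset.mul_sum]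
    refine Finset.sum_congr ?_ fun s hs => ?_
    · ext s; simp [hmem s]
    · simp only [Finset.mem_filter] at hs
      rw [hg s q.out (hE.symm hs.2)]
      ring
  rw [key μ, key μ']
  refine Finset.sum_congr rfl fun q _ => ?_
  rw [hμ _ ⟨q.out, rfl⟩]

/-- Induction step in the proof of Proposition 8.1: equality of class sums of
distributions is preserved under one step of the chain. -/
theorem lumping_step_preserves_class_sums {S : Type*} [Fintype S]
    (P : S → S → ℝ) (R : S → S → Prop)
    (hR : IsLumping P R)
    (μ μ' : S → ℝ)
    (hμ : ∀ H : Set S, IsClass R H → classSum H μ = classSum H μ') :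
    ∀ H : Set S, IsClass R H →
      classSum H (fun t => ∑ s, μ s * P s t) =
        classSum H (fun t => ∑ s, μ' s * P s t) := by
  intro H hH
  rw [classSum_step, classSum_step]
  exact sum_mul_eq hR.1 (fun s => classSum H (P s))
    (fun s₁ s₂ h => hR.2 s₁ s₂ h H hH) μ μ' hμ
end

section
/- Let S be a finite type, P : S → S → ℝ a matrix, R an ordinary lumping for P, and i₁, i₂ ∈ S with (i₁,i₂) ∈ R. Suppose ψ, ψ' : S → ℝ are the steady-state limits of the transient distributions: for every t ∈ S, (P^k)(i₁,t) → ψ(t) and (P^k)(i₂,t) → ψ'(t) as k → ∞. Then for every R-equivalence class H, Σ_{t∈H} ψ(t) = Σ_{t∈H} ψ'(t). (Proposition 8.1: for bisimilar processes the steady-state probabilities to be in an equivalence class coincide.) -/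
open Filter

lemma classSum_eq_sum_filter {S : Type*} [Fintype S] (H : Set S) (f : S → ℝ)
    [DecidablePred (· ∈ H)] :
    classSum H f = ∑ s ∈ Finset.univ.filter (· ∈ H), f s := by
  classical
  simp [classSum, Set.indicator_apply, Finset.sum_filter]

lemma key {S : Type*} [Fintype S] [DecidableEq S]
    (P : Matrix S S ℝ) (R : S → S → Prop)
    (hR : IsLumping (fun s t => P s t) R) :
    ∀ k : ℕ, ∀ j₁ j₂, R j₁ j₂ → ∀ H : Set S, IsClass R H →
      classSum H ((P ^ k) j₁) = classSum H ((P ^ k) j₂) := by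
  classical
  intro k
  induction k with
  | zero =>
    intro j₁ j₂ hj H hH
    obtain ⟨s, rfl⟩ := hH
    have hmem : R s j₁ ↔ R s j₂ :=
      ⟨fun h' => hR.1.trans h' hj, fun h' => hR.1.trans h' (hR.1.symm hj)⟩
    have base : ∀ j : S, classSum {t | R s t} ((P ^ 0) j) = if R s j then 1 else 0 := by
      intro j
      rw [classSum_eq_sum_filter]
      simp only [pow_zero, Matrix.one_apply]
      rw [Finset.sum_ite_eq]
      simp
    rw [base, base, if_congr hmem rfl rfl]
  | succ k ih =>
    intro j₁ j₂ hj H hH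
    -- step: classSum H ((P^(k+1)) j) = ∑ u, P j u * classSum H ((P^k) u)
    have step : ∀ j : S, classSum H ((P ^ (k+1)) j)
        = ∑ u, P j u * classSum H ((P ^ k) u) := by
      intro j
      simp only [classSum, pow_succ', Matrix.mul_apply, Set.indicator_apply]
      have h1 : ∀ x, (if x ∈ H then ∑ u, P j u * (P ^ k) u x else 0)
          = ∑ u, P j u * (if x ∈ H then (P ^ k) u x else 0) := by
        intro x; split <;> simp [Finset.mul_sum]
      simp_rw [h1]
      rw [Finset.sum_comm]
      simp_rw [← Finset.mul_sum]
    rw [step, step]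
    -- group by equivalence classes
    set st : Setoid S := ⟨R, hR.1⟩ with hst
    have hgroup : ∀ j : S, (∑ u, P j u * classSum H ((P ^ k) u))
        = ∑ c : Quotient st, (∑ u ∈ Finset.univ.filter (fun u => Quotient.mk st u = c), P j u)
            * classSum H ((P ^ k) c.out) := by
      intro j
      rw [← Finset.sum_fiberwise Finset.univ (fun u => Quotient.mk st u)
        (fun u => P j u * classSum H ((P ^ k) u))]
      refine Finset.sum_congr rfl fun c _ => ?_
      rw [Finset.sum_mul]
      refine Finset.sum_congr rfl fun u hu => ?_
      simp only [Finset.mem_filter] at hu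
      have hru : R c.out u := by
        have := hu.2
        rw [← Quotient.out_eq c] at this
        exact Quotient.exact this.symm
      rw [ih u c.out (hR.1.symm hru) H hH]
    rw [hgroup, hgroup]
    refine Finset.sum_congr rfl fun c _ => ?_
    congr 1
    -- the fiber sums coincide by the lumping property
    have hfiber : ∀ j : S, (∑ u ∈ Finset.univ.filter (fun u => Quotient.mk st u = c), P j u)
        = classSum {t | R c.out t} (P j) := by
      intro j
      rw [classSum_eq_sum_filter]
      refine Finset.sum_congr ?_ fun _ _ => rfl
      ext u
      simp only [Finset.mem_filter, Finset.mem_univ, true_and, Set.mem_setOf_eq]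
      constructor
      · intro hu
        rw [← Quotient.out_eq c] at hu
        exact Quotient.exact hu.symm
      · intro hu
        rw [← Quotient.out_eq c]
        exact (Quotient.sound hu).symm
    rw [hfiber, hfiber]
    exact hR.2 j₁ j₂ hj _ ⟨c.out, rfl⟩

/-- Proposition 8.1: if `(i₁, i₂)` belongs to an ordinary lumping `R` for `P`
and `ψ`, `ψ'` are the steady-state limits of the transient distributions
started in `i₁` and `i₂`, then the steady-state probabilities to be in every
`R`-equivalence class coincide. -/
theorem lumping_steady_state_class_sums {S : Type*} [Fintype S] [DecidableEq S]
    (P : Matrix S S ℝ) (R : S → S → Prop)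
    (hR : IsLumping (fun s t => P s t) R)
    (i₁ i₂ : S) (h : R i₁ i₂)
    (ψ ψ' : S → ℝ)
    (hψ : ∀ t, Tendsto (fun k : ℕ => (P ^ k) i₁ t) atTop (nhds (ψ t)))
    (hψ' : ∀ t, Tendsto (fun k : ℕ => (P ^ k) i₂ t) atTop (nhds (ψ' t))) :
    ∀ H : Set S, IsClass R H → classSum H ψ = classSum H ψ' := by
  classical
  intro H hH
  have t1 : Tendsto (fun k : ℕ => classSum H ((P ^ k) i₁)) atTop (nhds (classSum H ψ)) := by
    unfold classSum
    refine tendsto_finset_sum _ fun s _ => ?_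
    by_cases hs : s ∈ H <;> simp [Set.indicator_apply, hs, hψ s, tendsto_const_nhds]
  have t2 : Tendsto (fun k : ℕ => classSum H ((P ^ k) i₂)) atTop (nhds (classSum H ψ')) := by
    unfold classSum
    refine tendsto_finset_sum _ fun s _ => ?_
    by_cases hs : s ∈ H <;> simp [Set.indicator_apply, hs, hψ' s, tendsto_const_nhds]
  have heq : (fun k : ℕ => classSum H ((P ^ k) i₁)) = fun k => classSum H ((P ^ k) i₂) := by
    funext k
    exact key P R hR k i₁ i₂ h H hH
  rw [heq] at t1
  exact tendsto_nhds_unique t1 t2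
end

section
/- Let S be a finite type, L a type of labels, p a step kernel on S, and R a step stochastic bisimulation for p. Let n ≥ 1, let H₀, H₁, …, H_n be R-equivalence classes, A₁, …, A_n labels, and let s₀ ∈ H₀ and, for each 0 ≤ i ≤ n−1, a representative r_i ∈ H_i (with r₀ = s₀ allowed or not). Then the sum over all tuples (s₁,…,s_n) with s_i ∈ H_i for 1 ≤ i ≤ n of the products Π_{i=1}^n p s_{i−1} A_i s_i equals Π_{i=1}^n PM_{A_i}(r_{i−1}, H_i). In particular this product is independent of the choice of the representatives r_i ∈ H_i. (Path-sum lemma from the proof of Theorem 8.1: the total probability of all paths from s₀ passing through the classes H₁,…,H_n via labels A₁,…,A_n equals the product of the class-to-class transition probabilities.) -/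
lemma class_rel {S : Type*} {R : S → S → Prop} (hE : Equivalence R) {H : Set S}
    (hH : IsClass R H) {a b : S} (ha : a ∈ H) (hb : b ∈ H) : R a b := by
  obtain ⟨s, rfl⟩ := hH
  exact hE.trans (hE.symm ha) hb

lemma path_aux {S L : Type*} [Fintype S] [DecidableEq S]
    (p : S → L → S → ℝ)
    (R : S → S → Prop) (hR : IsStepBisim p R) :
    ∀ (n : ℕ) (H : Fin (n + 1) → Set S), (∀ i, IsClass R (H i)) →
      ∀ (A : Fin n → L) (s₀ : S), s₀ ∈ H 0 →
      ∀ (r : Fin n → S), (∀ i : Fin n, r i ∈ H i.castSucc) →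
    (∑ g : Fin (n + 1) → S,
        (if g 0 = s₀ then (1 : ℝ) else 0) *
          ∏ i : Fin n, (H i.succ).indicator (p (g i.castSucc) (A i)) (g i.succ))
      = ∏ i : Fin n, PMA p (A i) (r i) (H i.succ) := by
  intro n
  induction n with
  | zero =>
    intro H hH A s₀ hs₀ r hr
    simp only [Finset.univ_eq_empty, Finset.prod_empty, mul_one]
    rw [← (Equiv.funUnique (Fin 1) S).symm.sum_comp]
    simp [Equiv.funUnique]
  | succ n ih =>
    intro H hH A s₀ hs₀ r hr
    have hmem : ∀ g : Fin (n + 1) → S,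
        ((if g 0 = s₀ then (1 : ℝ) else 0) *
          ∏ i : Fin n, (H i.succ.castSucc).indicator
            (p (g i.castSucc) (A i.castSucc)) (g i.succ)) ≠ 0 →
        g (Fin.last n) ∈ H (Fin.last n).castSucc := by
      intro g hg
      cases n with
      | zero =>
        have h0 : g 0 = s₀ := by
          by_contra h; simp [h] at hg
        rw [show (Fin.last 0) = 0 from rfl, h0]
        simpa using hs₀
      | succ m =>
        have hprod : (∏ i : Fin (m+1), (H i.succ.castSucc).indicator
            (p (g i.castSucc) (A i.castSucc)) (g i.succ)) ≠ 0 := by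
          intro h; rw [h, mul_zero] at hg; exact hg rfl
        have hfac := Finset.prod_ne_zero_iff.mp hprod (Fin.last m) (Finset.mem_univ _)
        by_contra hmem'
        rw [Set.indicator_of_notMem] at hfac
        · exact hfac rfl
        · simpa [Fin.succ_last] using hmem'
    rw [← ((Fin.snocEquiv (fun _ : Fin (n+2) => S)).sum_comp
      (fun g => (if g 0 = s₀ then (1 : ℝ) else 0) *
          ∏ i : Fin (n+1), (H i.succ).indicator (p (g i.castSucc) (A i)) (g i.succ)))]
    rw [Fintype.sum_prod_type_right]
    have key : ∀ g' : Fin (n+1) → S,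
        (∑ x : S, (if (Fin.snocEquiv (fun _ : Fin (n+2) => S) (x, g')) 0 = s₀ then (1:ℝ) else 0) *
          ∏ i : Fin (n+1), (H i.succ).indicator
            (p ((Fin.snocEquiv (fun _ : Fin (n+2) => S) (x, g')) i.castSucc) (A i))
            ((Fin.snocEquiv (fun _ : Fin (n+2) => S) (x, g')) i.succ))
        = ((if g' 0 = s₀ then (1:ℝ) else 0) *
            ∏ i : Fin n, (H i.succ.castSucc).indicator
              (p (g' i.castSucc) (A i.castSucc)) (g' i.succ))
          * PMA p (A (Fin.last n)) (g' (Fin.last n)) (H (Fin.last n).succ) := by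
      intro g'
      have hx : ∀ x : S,
          (if (Fin.snocEquiv (fun _ : Fin (n+2) => S) (x, g')) 0 = s₀ then (1:ℝ) else 0) *
          ∏ i : Fin (n+1), (H i.succ).indicator
            (p ((Fin.snocEquiv (fun _ : Fin (n+2) => S) (x, g')) i.castSucc) (A i))
            ((Fin.snocEquiv (fun _ : Fin (n+2) => S) (x, g')) i.succ)
          = ((if g' 0 = s₀ then (1:ℝ) else 0) *
              ∏ i : Fin n, (H i.succ.castSucc).indicator
                (p (g' i.castSucc) (A i.castSucc)) (g' i.succ))
            * (H (Fin.last n).succ).indicator (p (g' (Fin.last n)) (A (Fin.last n))) x := by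
        intro x
        simp only [Fin.snocEquiv_apply]
        rw [Fin.prod_univ_castSucc]
        have h0 : (Fin.snoc g' x : Fin (n+2) → S) 0 = g' 0 := by
          rw [show (0 : Fin (n+2)) = Fin.castSucc 0 by simp, Fin.snoc_castSucc]
        simp only [h0, ← Fin.succ_castSucc, Fin.succ_last, Fin.snoc_castSucc,
          Fin.snoc_last, Fin.succ_castSucc, mul_assoc]
      rw [Finset.sum_congr rfl (fun x _ => hx x), ← Finset.mul_sum]
      rfl
    rw [Finset.sum_congr rfl (fun g' _ => key g')]
    have hrep : ∀ g' : Fin (n+1) → S, g' ∈ Finset.univ →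
        ((if g' 0 = s₀ then (1:ℝ) else 0) *
            ∏ i : Fin n, (H i.succ.castSucc).indicator
              (p (g' i.castSucc) (A i.castSucc)) (g' i.succ))
          * PMA p (A (Fin.last n)) (g' (Fin.last n)) (H (Fin.last n).succ)
        = ((if g' 0 = s₀ then (1:ℝ) else 0) *
            ∏ i : Fin n, (H i.succ.castSucc).indicator
              (p (g' i.castSucc) (A i.castSucc)) (g' i.succ))
          * PMA p (A (Fin.last n)) (r (Fin.last n)) (H (Fin.last n).succ) := by
      intro g' _
      by_cases hz : ((if g' 0 = s₀ then (1:ℝ) else 0) *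
            ∏ i : Fin n, (H i.succ.castSucc).indicator
              (p (g' i.castSucc) (A i.castSucc)) (g' i.succ)) = 0
      · rw [hz, zero_mul, zero_mul]
      · rw [hR.2 _ _ (class_rel hR.1 (hH _) (hmem g' hz) (hr (Fin.last n)))
          (H (Fin.last n).succ) (hH _) (A (Fin.last n))]
    rw [Finset.sum_congr rfl hrep, ← Finset.sum_mul]
    rw [ih (fun i => H i.castSucc) (fun i => hH _) (fun i => A i.castSucc) s₀
      (by simpa using hs₀) (fun i => r i.castSucc) (fun i => hr i.castSucc)]
    rw [Fin.prod_univ_castSucc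
      (f := fun i : Fin (n+1) => PMA p (A i) (r i) (H i.succ))]
    simp only [Fin.succ_castSucc]

/-- Path-sum lemma from the proof of Theorem 8.1: the total probability of all
paths from `s₀` passing through the equivalence classes `H 1, …, H n` via
labels `A 1, …, A n` equals the product of the class-to-class transition
probabilities, computed from arbitrary representatives `r i ∈ H i`. -/
theorem path_sum_through_classes {S L : Type*} [Fintype S] [DecidableEq S]
    (p : S → L → S → ℝ)
    (hp_nonneg : ∀ s A t, 0 ≤ p s A t)
    (R : S → S → Prop) (hR : IsStepBisim p R)
    (n : ℕ) (hn : 1 ≤ n)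
    (H : Fin (n + 1) → Set S) (hH : ∀ i, IsClass R (H i))
    (A : Fin n → L)
    (s₀ : S) (hs₀ : s₀ ∈ H 0)
    (r : Fin n → S) (hr : ∀ i : Fin n, r i ∈ H i.castSucc) :
    (∑ g : Fin (n + 1) → S,
        (if g 0 = s₀ then (1 : ℝ) else 0) *
          ∏ i : Fin n, (H i.succ).indicator (p (g i.castSucc) (A i)) (g i.succ))
      = ∏ i : Fin n, PMA p (A i) (r i) (H i.succ) := by
  exact path_aux p R hR n H hH A s₀ hs₀ r hr
end

section
/- Let S be a finite type, L a type of labels, p a step kernel on S, and R a step stochastic bisimulation for p. For a finite sequence of labels A₁, …, A_n and a state s₀ ∈ S, define the derived step-trace probability PT(A₁⋯A_n, s₀) := Σ over all tuples (s₁,…,s_n) ∈ S^n of Π_{i=1}^n p s_{i−1} A_i s_i. Then for every (s₀, s̄₀) ∈ R and every label sequence A₁,…,A_n, PT(A₁⋯A_n, s₀) = PT(A₁⋯A_n, s̄₀); i.e. the derived step-trace probability is constant on R-equivalence classes. (Key claim in the proof of Theorem 8.1.) -/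
/-- The derived step-trace probability `PT(A₁⋯Aₙ, s₀)`: the sum over all
tuples `(s₁, …, sₙ)` of the products `Π_{i=1}^n p s_{i−1} A_i s_i`. -/
noncomputable def PT {S L : Type*} [Fintype S]
    (p : S → L → S → ℝ) : List L → S → ℝ
  | [], _ => 1
  | A :: As, s => ∑ t, p s A t * PT p As t

/-- Key claim in the proof of Theorem 8.1: the derived step-trace probability
is constant on the equivalence classes of a step stochastic bisimulation. -/
theorem stepBisim_trace_prob_constant {S L : Type*} [Fintype S]
    (p : S → L → S → ℝ)
    (hp_nonneg : ∀ s A t, 0 ≤ p s A t)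
    (R : S → S → Prop) (hR : IsStepBisim p R) :
    ∀ s₀ s₀' : S, R s₀ s₀' → ∀ As : List L, PT p As s₀ = PT p As s₀' := by
  classical
  obtain ⟨hEq, hBisim⟩ := hR
  intro s₀ s₀' h As
  induction As generalizing s₀ s₀' with
  | nil => rfl
  | cons A As ih =>
    -- Sum fiberwise over the quotient by R
    let st : Setoid S := ⟨R, hEq⟩
    have key : ∀ s : S,
        PT p (A :: As) s =
          ∑ q : Quotient st, PT p As q.out * PMA p A s {t | R q.out t} := by
      intro s
      show (∑ t, p s A t * PT p As t) = _
      rw [← Fintype.sum_fiberwise (fun t : S => (⟦t⟧ : Quotient st))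
        (fun t => p s A t * PT p As t)]
      refine Finset.sum_congr rfl fun q _ => ?_
      have hmem : ∀ t : S, (⟦t⟧ : Quotient st) = q ↔ R q.out t := by
        intro t
        constructor
        · intro ht
          have : (⟦t⟧ : Quotient st) = ⟦q.out⟧ := by rw [ht, Quotient.out_eq]
          exact hEq.symm (Quotient.exact this)
        · intro ht
          have : (⟦q.out⟧ : Quotient st) = ⟦t⟧ := Quotient.sound ht
          rw [← this, Quotient.out_eq]
      have hPT : ∀ t : S, R q.out t → PT p As t = PT p As q.out :=
        fun t ht => (ih q.out t ht).symm
      rw [← Finset.sum_subtype (Finset.univ.filter (fun t : S => (⟦t⟧ : Quotient st) = q))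
        (fun x => by simp) (fun t => p s A t * PT p As t)]
      rw [PMA]
      rw [Finset.mul_sum]
      rw [Finset.sum_filter]
      refine Finset.sum_congr rfl fun t _ => ?_
      by_cases ht : (⟦t⟧ : Quotient st) = q
      · have hr : R q.out t := (hmem t).1 ht
        rw [if_pos ht, hPT t hr]
        simp [Set.indicator_apply, hr]
        ring
      · have hr : ¬ R q.out t := fun hr => ht ((hmem t).2 hr)
        rw [if_neg ht]
        simp [Set.indicator_apply, hr]
    rw [key s₀, key s₀']
    refine Finset.sum_congr rfl fun q _ => ?_
    rw [hBisim s₀ s₀' h {t | R q.out t} ⟨q.out, rfl⟩ A]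
end

section
/- Let S be a finite type, L a type of labels, p a step kernel on S, and R a step stochastic bisimulation for p. Let φ, φ' : S → ℝ satisfy Σ_{s∈H} φ(s) = Σ_{s∈H} φ'(s) for every R-equivalence class H. Then for every R-equivalence class H and every finite sequence of labels A₁,…,A_n, Σ_{s∈H} φ(s)·PT(A₁⋯A_n, s) = Σ_{s∈H} φ'(s)·PT(A₁⋯A_n, s). (Theorem 8.1: for bisimilar processes, the steady-state probabilities to enter an equivalence class and start a given derived step trace from it coincide.) -/
open Classical in
lemma indicator_sum_eq_filter {S : Type*} [Fintype S] (H : Set S) (f : S → ℝ) :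
    ∑ t, H.indicator f t = ∑ t ∈ Finset.univ.filter (· ∈ H), f t := by
  rw [Finset.sum_filter]
  refine Finset.sum_congr rfl fun t _ => ?_
  by_cases h : t ∈ H <;> simp [Set.indicator, h]

open Classical in
lemma key_sum_eq {S L : Type*} [Fintype S] (p : S → L → S → ℝ)
    {R : S → S → Prop} (hR : IsStepBisim p R)
    (g : S → ℝ) (hg : ∀ a b, R a b → g a = g b)
    {s₁ s₂ : S} (h : R s₁ s₂) (A : L) :
    ∑ t, p s₁ A t * g t = ∑ t, p s₂ A t * g t := by
  have hE := hR.1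
  let st : Setoid S := ⟨R, hE⟩
  have main : ∀ s : S, ∑ t, p s A t * g t =
      ∑ q : Quotient st, PMA p A s {t | R q.out t} * g q.out := by
    intro s
    rw [← Finset.sum_fiberwise Finset.univ (Quotient.mk st) (fun t => p s A t * g t)]
    refine Finset.sum_congr rfl fun q _ => ?_
    have hfib : ∀ t : S, Quotient.mk st t = q ↔ R q.out t := by
      intro t
      constructor
      · intro ht
        have : Quotient.mk st q.out = Quotient.mk st t := by rw [ht, Quotient.out_eq]
        exact Quotient.eq.mp this
      · intro ht
        have : Quotient.mk st q.out = Quotient.mk st t := Quotient.sound ht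
        rw [← this, Quotient.out_eq]
    have : ∑ t ∈ Finset.univ.filter (fun t => Quotient.mk st t = q),
        p s A t * g t = ∑ t ∈ Finset.univ.filter (fun t => Quotient.mk st t = q),
        p s A t * g q.out := by
      refine Finset.sum_congr rfl fun t ht => ?_
      have : R q.out t := (hfib t).mp (Finset.mem_filter.mp ht).2
      rw [hg _ _ this]
    rw [this, ← Finset.sum_mul, PMA, indicator_sum_eq_filter]
    congr 1
    apply Finset.sum_congr _ fun _ _ => rfl
    ext t
    simp [hfib t]
  rw [main s₁, main s₂]
  refine Finset.sum_congr rfl fun q _ => ?_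
  rw [hR.2 s₁ s₂ h {t | R q.out t} ⟨q.out, rfl⟩ A]

lemma PT_const_on_class {S L : Type*} [Fintype S] (p : S → L → S → ℝ)
    {R : S → S → Prop} (hR : IsStepBisim p R) :
    ∀ (As : List L) (a b : S), R a b → PT p As a = PT p As b := by
  intro As
  induction As with
  | nil => intro a b _; rfl
  | cons A As ih =>
    intro a b hab
    show (∑ t, p a A t * PT p As t) = ∑ t, p b A t * PT p As t
    exact key_sum_eq p hR (PT p As) (fun x y hxy => ih x y hxy) hab A

/-- Theorem 8.1: if two distributions have equal sums over every equivalence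
class of a step stochastic bisimulation, then the probabilities to enter an
equivalence class and start a given derived step trace from it coincide. -/
theorem stepBisim_steady_state_trace {S L : Type*} [Fintype S]
    (p : S → L → S → ℝ)
    (hp_nonneg : ∀ s A t, 0 ≤ p s A t)
    (R : S → S → Prop) (hR : IsStepBisim p R)
    (φ φ' : S → ℝ)
    (hφ : ∀ H : Set S, IsClass R H → classSum H φ = classSum H φ') :
    ∀ H : Set S, IsClass R H → ∀ As : List L,
      classSum H (fun s => φ s * PT p As s) =
        classSum H (fun s => φ' s * PT p As s) := by
  rintro H ⟨s, rfl⟩ As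
  have key : ∀ ψ : S → ℝ, classSum {t | R s t} (fun u => ψ u * PT p As u) =
      PT p As s * classSum {t | R s t} ψ := by
    intro ψ
    rw [classSum, classSum, Finset.mul_sum]
    refine Finset.sum_congr rfl fun u _ => ?_
    by_cases hu : u ∈ {t | R s t}
    · rw [Set.indicator_of_mem hu, Set.indicator_of_mem hu,
        PT_const_on_class p hR As u s (hR.1.symm hu)]
      ring
    · rw [Set.indicator_of_notMem hu, Set.indicator_of_notMem hu, mul_zero]
  rw [key φ, key φ', hφ _ ⟨s, rfl⟩]
end

section
/- Let S₁, S₂ be finite types, S = S₁ ⊕ S₂ their disjoint union, L a finite type of labels, and p a step kernel on S that vanishes between the two components (p s A t = 0 whenever s and t lie in different components). Let R be a step stochastic bisimulation for p. Then for every R-equivalence class H, any s ∈ H lying in the S₁-component and any s' ∈ H lying in the S₂-component satisfy Σ_{A∈L} Σ_{t ∈ H ∩ inl(S₁)} p s A t = Σ_{A∈L} Σ_{t ∈ H ∩ inr(S₂)} p s' A t. Consequently, writing q for this common value and assuming q < 1, the average sojourn time 1/(1−q) and the sojourn time variance q/(1−q)² of the class H computed in the first component coincide with those computed in the second component. (Proposition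 8.2: step stochastic bisimulation preserves the sojourn time averages and variances in the equivalence classes.) -/
/-- Proposition 8.2: a step stochastic bisimulation on the disjoint union of
two processes preserves the self-transition probability of every equivalence
class computed in either component; consequently the average sojourn times
`1/(1−q)` and the sojourn time variances `q/(1−q)²` in the equivalence
classes coincide. -/
theorem stepBisim_sojourn_time {S₁ S₂ L : Type*}
    [Fintype S₁] [Fintype S₂] [Fintype L]
    (p : S₁ ⊕ S₂ → L → S₁ ⊕ S₂ → ℝ)
    (hp_nonneg : ∀ s A t, 0 ≤ p s A t)
    (hp12 : ∀ s A t, p (Sum.inl s) A (Sum.inr t) = 0)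
    (hp21 : ∀ s A t, p (Sum.inr s) A (Sum.inl t) = 0)
    (R : (S₁ ⊕ S₂) → (S₁ ⊕ S₂) → Prop) (hR : IsStepBisim p R) :
    ∀ H : Set (S₁ ⊕ S₂), IsClass R H →
      ∀ s₁ : S₁, ∀ s₂ : S₂, Sum.inl s₁ ∈ H → Sum.inr s₂ ∈ H →
        (∑ A : L, PMA p A (Sum.inl s₁) (H ∩ Set.range Sum.inl))
            = (∑ A : L, PMA p A (Sum.inr s₂) (H ∩ Set.range Sum.inr)) ∧
          (∀ q₁ q₂ : ℝ,
            q₁ = (∑ A : L, PMA p A (Sum.inl s₁) (H ∩ Set.range Sum.inl)) →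
            q₂ = (∑ A : L, PMA p A (Sum.inr s₂) (H ∩ Set.range Sum.inr)) →
            q₁ < 1 →
            1 / (1 - q₁) = 1 / (1 - q₂) ∧
              q₁ / (1 - q₁) ^ 2 = q₂ / (1 - q₂) ^ 2) := by
  intro H hH s₁ s₂ h1 h2
  obtain ⟨heq, hbis⟩ := hR
  obtain ⟨s0, hs0⟩ := hH
  have hr12 : R (Sum.inl s₁) (Sum.inr s₂) := by
    have a1 : R s0 (Sum.inl s₁) := by rw [hs0] at h1; exact h1
    have a2 : R s0 (Sum.inr s₂) := by rw [hs0] at h2; exact h2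
    exact heq.trans (heq.symm a1) a2
  have key1 : ∀ A : L, PMA p A (Sum.inl s₁) (H ∩ Set.range Sum.inl)
      = PMA p A (Sum.inl s₁) H := by
    intro A
    unfold PMA
    refine Finset.sum_congr rfl fun t _ => ?_
    rcases t with a | b
    · by_cases h : Sum.inl a ∈ H
      · rw [Set.indicator_of_mem (Set.mem_inter h (Set.mem_range_self a)), Set.indicator_of_mem h]
      · rw [Set.indicator_of_notMem (fun hc => h hc.1), Set.indicator_of_notMem h]
    · have hz : p (Sum.inl s₁) A (Sum.inr b) = 0 := hp12 _ _ _
      by_cases h : Sum.inr b ∈ H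
      · rw [Set.indicator_of_notMem (fun hc => by
          obtain ⟨x, hx⟩ := hc.2; exact Sum.inl_ne_inr hx), Set.indicator_of_mem h, hz]
      · rw [Set.indicator_of_notMem (fun hc => h hc.1), Set.indicator_of_notMem h]
  have key2 : ∀ A : L, PMA p A (Sum.inr s₂) (H ∩ Set.range Sum.inr)
      = PMA p A (Sum.inr s₂) H := by
    intro A
    unfold PMA
    refine Finset.sum_congr rfl fun t _ => ?_
    rcases t with a | b
    · have hz : p (Sum.inr s₂) A (Sum.inl a) = 0 := hp21 _ _ _
      by_cases h : Sum.inl a ∈ H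
      · rw [Set.indicator_of_notMem (fun hc => by
          obtain ⟨x, hx⟩ := hc.2; exact Sum.inr_ne_inl hx), Set.indicator_of_mem h, hz]
      · rw [Set.indicator_of_notMem (fun hc => h hc.1), Set.indicator_of_notMem h]
    · by_cases h : Sum.inr b ∈ H
      · rw [Set.indicator_of_mem (Set.mem_inter h (Set.mem_range_self b)), Set.indicator_of_mem h]
      · rw [Set.indicator_of_notMem (fun hc => h hc.1), Set.indicator_of_notMem h]
  have hmain : (∑ A : L, PMA p A (Sum.inl s₁) (H ∩ Set.range Sum.inl))
      = (∑ A : L, PMA p A (Sum.inr s₂) (H ∩ Set.range Sum.inr)) := by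
    refine Finset.sum_congr rfl fun A _ => ?_
    rw [key1 A, key2 A, hbis _ _ hr12 H ⟨s0, hs0⟩ A]
  refine ⟨hmain, fun q₁ q₂ hq₁ hq₂ _ => ?_⟩
  have : q₁ = q₂ := by rw [hq₁, hq₂, hmain]
  subst this
  exact ⟨rfl, rfl⟩
end

section
/- Let S be a finite type, P : S → S → ℝ a row-stochastic matrix, and R an ordinary lumping for P. Let Q be a quotient matrix for P, i.e. a function on pairs of R-equivalence classes satisfying Q([s], c) = Σ_{t ∈ c} P(s,t) for every s ∈ S and every R-class c, where [s] denotes the class of s (this is well defined by lumpability). If ψ : S → ℝ is a stationary distribution of P (Σ_s ψ(s)·P(s,t) = ψ(t) for all t, ψ ≥ 0, Σ_s ψ(s) = 1), then ψ̂(c) := Σ_{s∈c} ψ(s) is a stationary distribution of Q: Σ_{c'} ψ̂(c')·Q(c',c) = ψ̂(c) for every class c, ψ̂ ≥ 0 and Σ_c ψ̂(c) = 1; moreover Q is row-stochastic. (Section 8.1: the steady-state probability of each quotient state equals the sum of the steady-state probabilities of its constituent states, φ_{↔ss}(K) = Σ_{s∈K} φ(s).) -/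
/-- Section 8.1: for a DTMC lumped by an ordinary lumping (with quotient map
`cl : S → K` and quotient matrix `Q`), the quotient matrix is row-stochastic
and the steady-state probability of each quotient state equals the sum of
the steady-state probabilities of its constituent states; in particular the
aggregated distribution `ψ̂` is a stationary distribution of `Q`. -/
theorem quotient_stationary_distribution {S K : Type*}
    [Fintype S] [Fintype K] [DecidableEq K]
    (P : S → S → ℝ)
    (hP_nonneg : ∀ s t, 0 ≤ P s t)
    (hP_row : ∀ s, ∑ t, P s t = 1)
    (R : S → S → Prop) (hR : IsLumping P R)
    (cl : S → K) (hcl_surj : Function.Surjective cl)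
    (hcl : ∀ s t, R s t ↔ cl s = cl t)
    (Q : K → K → ℝ)
    (hQ : ∀ s c, Q (cl s) c = ∑ t, if cl t = c then P s t else 0)
    (ψ : S → ℝ)
    (hψ_nonneg : ∀ s, 0 ≤ ψ s)
    (hψ_sum : ∑ s, ψ s = 1)
    (hψ_stat : ∀ t, ∑ s, ψ s * P s t = ψ t)
    (ψhat : K → ℝ)
    (hψhat : ∀ c, ψhat c = ∑ s, if cl s = c then ψ s else 0) :
    (∀ c c', 0 ≤ Q c c') ∧
    (∀ c, ∑ c', Q c c' = 1) ∧
    (∀ c, 0 ≤ ψhat c) ∧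
    (∑ c, ψhat c = 1) ∧
    (∀ c, ∑ c', ψhat c' * Q c' c = ψhat c) := by
  refine ⟨?_, ?_, ?_, ?_, ?_⟩
  · intro c c'
    obtain ⟨s, rfl⟩ := hcl_surj c
    rw [hQ]
    exact Finset.sum_nonneg fun t _ => by
      split <;> [exact hP_nonneg s t; rfl]
  · intro c
    obtain ⟨s, rfl⟩ := hcl_surj c
    simp only [hQ]
    rw [Finset.sum_comm]
    simp [hP_row]
  · intro c
    rw [hψhat]
    exact Finset.sum_nonneg fun s _ => by
      split <;> [exact hψ_nonneg s; rfl]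
  · simp only [hψhat]
    rw [Finset.sum_comm]
    simp [hψ_sum]
  · intro c
    have key : ∀ c', ψhat c' * Q c' c = ∑ s, if cl s = c' then ψ s * Q (cl s) c else 0 := by
      intro c'
      rw [hψhat, Finset.sum_mul]
      refine Finset.sum_congr rfl fun s _ => ?_
      split_ifs with h
      · rw [h]
      · ring
    simp only [key]
    rw [Finset.sum_comm]
    simp only [Finset.sum_ite_eq, Finset.mem_univ, if_true]
    have : ∀ s, ψ s * Q (cl s) c = ∑ t, if cl t = c then ψ s * P s t else 0 := by
      intro s
      rw [hQ, Finset.mul_sum]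
      exact Finset.sum_congr rfl fun t _ => by split <;> ring
    simp only [this]
    rw [Finset.sum_comm, hψhat]
    refine Finset.sum_congr rfl fun t _ => ?_
    split_ifs with h
    · exact hψ_stat t
    · simp
end
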